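/- Let R be a commutative local ring in which 2 = 0, and let q(x,y,z) = c_xx·x² + c_yy·y² + c_zz·z² + c_xy·xy + c_xz·xz + c_yz·yz be a ternary quadratic form with coefficients in R such that at least one of c_xy, c_xz, c_yz is a unit of R. Then there exist a unit λ ∈ R, an invertible matrix M ∈ GL₃(R), and elements a, b ∈ R such that λ·q(M·(x,y,z)) = a·x² + b·y² + x·z + z². (Local normal form of a conic bundle in characteristic 2 near a point whose fibre is a smooth conic or a cross of lines.) -/

import Mathlib

/-- The ternary quadratic form with coefficients `cxx, …, cyz` over a commutative ring. -/
def ternaryQF {R : Type*} [CommRing R] (cxx cyy czz cxy cxz cyz : R)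
    (v : Fin 3 → R) : R :=
  cxx * v 0 ^ 2 + cyy * v 1 ^ 2 + czz * v 2 ^ 2
    + cxy * (v 0 * v 1) + cxz * (v 0 * v 2) + cyz * (v 1 * v 2)

section Aux

variable {R : Type*} [CommRing R]

/-- Auxiliary predicate: the conclusion of the main theorem. -/
def GoodQF (cxx cyy czz cxy cxz cyz : R) : Prop :=
  ∃ (l : R) (M : Matrix (Fin 3) (Fin 3) R) (a b : R),
    IsUnit l ∧ IsUnit M.det ∧
    ∀ v : Fin 3 → R,
      l * ternaryQF cxx cyy czz cxy cxz cyz (M.mulVec v)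
        = a * v 0 ^ 2 + b * v 1 ^ 2 + v 0 * v 2 + v 2 ^ 2

lemma GoodQF.transfer {c0 c1 c2 c3 c4 c5 d0 d1 d2 d3 d4 d5 : R}
    (l1 : R) (M1 : Matrix (Fin 3) (Fin 3) R) (hl1 : IsUnit l1) (hM1 : IsUnit M1.det)
    (hq : ∀ v : Fin 3 → R,
      l1 * ternaryQF c0 c1 c2 c3 c4 c5 (M1.mulVec v) = ternaryQF d0 d1 d2 d3 d4 d5 v)
    (h : GoodQF d0 d1 d2 d3 d4 d5) : GoodQF c0 c1 c2 c3 c4 c5 := by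
  obtain ⟨l, M, a, b, hl, hMd, hv⟩ := h
  refine ⟨l * l1, M1 * M, a, b, hl.mul hl1, ?_, fun v => ?_⟩
  · rw [Matrix.det_mul]; exact hM1.mul hMd
  · have : (M1 * M).mulVec v = M1.mulVec (M.mulVec v) := by
      rw [Matrix.mulVec_mulVec]
    rw [this]
    calc l * l1 * ternaryQF c0 c1 c2 c3 c4 c5 (M1.mulVec (M.mulVec v))
        = l * (l1 * ternaryQF c0 c1 c2 c3 c4 c5 (M1.mulVec (M.mulVec v))) := by ring
      _ = l * ternaryQF d0 d1 d2 d3 d4 d5 (M.mulVec v) := by rw [hq]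
      _ = _ := hv v

lemma goodQF_base (a b : R) : GoodQF a b 1 0 1 0 := by
  refine ⟨1, 1, a, b, isUnit_one, by simp, fun v => ?_⟩
  simp [ternaryQF, Matrix.one_mulVec]
  ring

/-- final stage: diagonal plus `xz`. -/
lemma goodQF_diag [IsLocalRing R] (h2 : (2 : R) = 0) (A B C : R) :
    GoodQF A B C 0 1 0 := by
  by_cases hC : IsUnit C
  · obtain ⟨u, hu⟩ := hC.exists_left_inv
    refine ⟨u, !![C,0,0;0,1,0;0,0,1], A*C, u*B, IsUnit.of_mul_eq_one (a := u) C hu, ?_, fun v => ?_⟩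
    · rw [Matrix.det_fin_three]
      simp
      exact hC
    · simp [ternaryQF, Matrix.mulVec, dotProduct, Fin.sum_univ_three]
      linear_combination (A * C * v 0 ^ 2 + v 2 ^ 2 + v 0 * v 2) * hu
  by_cases hA : IsUnit A
  · obtain ⟨u, hu⟩ := hA.exists_left_inv
    refine ⟨u, !![0,0,1;0,1,0;A,0,0], C*A, u*B, IsUnit.of_mul_eq_one (a := u) A hu, ?_, fun v => ?_⟩
    · rw [Matrix.det_fin_three]
      simp
      exact hA
    · simp [ternaryQF, Matrix.mulVec, dotProduct, Fin.sum_univ_three]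
      linear_combination (C * A * v 0 ^ 2 + v 2 ^ 2 + v 0 * v 2) * hu
  · have hU : IsUnit (A + C + 1) := by
      by_contra hN
      have h1 : (1 : R) ∈ IsLocalRing.maximalIdeal R := by
        have hA' : A ∈ IsLocalRing.maximalIdeal R := by
          rw [IsLocalRing.mem_maximalIdeal, mem_nonunits_iff]; exact hA
        have hC' : C ∈ IsLocalRing.maximalIdeal R := by
          rw [IsLocalRing.mem_maximalIdeal, mem_nonunits_iff]; exact hC
        have hN' : A + C + 1 ∈ IsLocalRing.maximalIdeal R := by
          rw [IsLocalRing.mem_maximalIdeal, mem_nonunits_iff]; exact hN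
        have hs : A + C + 1 - A - C ∈ IsLocalRing.maximalIdeal R :=
          Ideal.sub_mem _ (Ideal.sub_mem _ hN' hA') hC'
        rwa [show A + C + 1 - A - C = 1 by ring] at hs
      exact (IsLocalRing.maximalIdeal.isMaximal R).ne_top (Ideal.eq_top_of_isUnit_mem _ h1 isUnit_one)
    obtain ⟨w, hw⟩ := hU.exists_left_inv
    refine ⟨w, !![A+C+1,0,1;0,1,0;0,0,1], A*(A+C+1), w*B,
      IsUnit.of_mul_eq_one (a := w) (A+C+1) hw, ?_, fun v => ?_⟩
    · have : (!![A+C+1,0,1;0,1,0;0,0,1] : Matrix (Fin 3) (Fin 3) R).det = A+C+1 := by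
        rw [Matrix.det_fin_three]
        simp [Matrix.vecHead, Matrix.vecTail]
      rw [this]
      exact IsUnit.of_mul_eq_one (a := A+C+1) w (by rw [mul_comm]; exact hw)
    · simp [ternaryQF, Matrix.mulVec, dotProduct, Fin.sum_univ_three]
      linear_combination (A*(A+C+1) * v 0 ^ 2 + v 2 ^ 2 + v 0 * v 2) * hw
        + (w * A * (A+C+1) * v 0 * v 2) * h2

/-- middle stage: `xz` coefficient equal to `1`. -/
lemma goodQF_one [IsLocalRing R] (h2 : (2 : R) = 0) (A B C p r : R) :
    GoodQF A B C p 1 r := by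
  -- kill the xy coefficient
  refine GoodQF.transfer 1 !![1,0,0;0,1,0;0,p,1] isUnit_one ?_ (fun v => ?_)
    (d0 := A) (d1 := B + C*p^2 + r*p) (d2 := C) (d3 := 0) (d4 := 1) (d5 := r) ?_
  · rw [Matrix.det_fin_three]; simp
  · simp [ternaryQF, Matrix.mulVec, dotProduct, Fin.sum_univ_three]
    linear_combination (p * v 0 * v 1 + C * p * v 1 * v 2) * h2
  -- kill the yz coefficient
  refine GoodQF.transfer 1 !![1,r,0;0,1,0;0,0,1] isUnit_one ?_ (fun v => ?_)
    (d0 := A) (d1 := B + C*p^2 + r*p + A*r^2) (d2 := C) (d3 := 0) (d4 := 1) (d5 := 0) ?_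
  · rw [Matrix.det_fin_three]; simp
  · simp [ternaryQF, Matrix.mulVec, dotProduct, Fin.sum_univ_three]
    linear_combination (A * r * v 0 * v 1 + r * v 1 * v 2) * h2
  exact goodQF_diag h2 _ _ _

/-- the case where the `xz` coefficient is a unit. -/
lemma goodQF_xz [IsLocalRing R] (h2 : (2 : R) = 0) (cxx cyy czz cxy cxz cyz : R)
    (hxz : IsUnit cxz) : GoodQF cxx cyy czz cxy cxz cyz := by
  obtain ⟨e, he⟩ := hxz.exists_left_inv
  refine GoodQF.transfer e 1 (IsUnit.of_mul_eq_one (a := e) cxz he) (by simp) (fun v => ?_)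
    (d0 := e*cxx) (d1 := e*cyy) (d2 := e*czz) (d3 := e*cxy) (d4 := 1) (d5 := e*cyz) ?_
  · simp [ternaryQF, Matrix.one_mulVec]
    linear_combination (v 0 * v 2) * he
  exact goodQF_one h2 _ _ _ _ _

end Aux

/-- over a commutative local ring `R` with `2 = 0`, a ternary quadratic form
one of whose mixed coefficients is a unit can be brought, by a unit scalar `λ` and an
invertible linear change of coordinates `M`, into the normal form
`a·x² + b·y² + x·z + z²`. -/
theorem local_normal_form_char_two
    (R : Type*) [CommRing R] [IsLocalRing R] (h2 : (2 : R) = 0)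
    (cxx cyy czz cxy cxz cyz : R)
    (hu : IsUnit cxy ∨ IsUnit cxz ∨ IsUnit cyz) :
    ∃ (l : R) (M : Matrix (Fin 3) (Fin 3) R) (a b : R),
      IsUnit l ∧ IsUnit M.det ∧
      ∀ v : Fin 3 → R,
        l * ternaryQF cxx cyy czz cxy cxz cyz (M.mulVec v)
          = a * v 0 ^ 2 + b * v 1 ^ 2 + v 0 * v 2 + v 2 ^ 2 := by
  show GoodQF cxx cyy czz cxy cxz cyz
  rcases hu with h | h | h
  · -- swap y and z
    refine GoodQF.transfer 1 !![1,0,0;0,0,1;0,1,0] isUnit_one ?_ (fun v => ?_)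
      (d0 := cxx) (d1 := czz) (d2 := cyy) (d3 := cxz) (d4 := cxy) (d5 := cyz) ?_
    · rw [Matrix.det_fin_three]; simp
    · simp [ternaryQF, Matrix.mulVec, dotProduct, Fin.sum_univ_three]
      ring
    exact goodQF_xz h2 _ _ _ _ _ _ h
  · exact goodQF_xz h2 _ _ _ _ _ _ h
  · -- swap x and y
    refine GoodQF.transfer 1 !![0,1,0;1,0,0;0,0,1] isUnit_one ?_ (fun v => ?_)
      (d0 := cyy) (d1 := cxx) (d2 := czz) (d3 := cxy) (d4 := cyz) (d5 := cxz) ?_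
    · rw [Matrix.det_fin_three]; simp
    · simp [ternaryQF, Matrix.mulVec, dotProduct, Fin.sum_univ_three]
      ring
    exact goodQF_xz h2 _ _ _ _ _ _ h
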